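/- Let p > 1 and define g(t) = f₁(t)^{p+1}/t for t > 0. Then g is strictly increasing on (0,∞) and g(t) → 0 as t → 0⁺. -/

import Mathlib

open Real Filter Set

/-- `Fk κ t = ∫₀ᵗ √(1 + 2κ s²) ds`. -/
noncomputable def Fk (κ t : ℝ) : ℝ := ∫ s in (0:ℝ)..t, Real.sqrt (1 + 2*κ*s^2)

/-- `f` is the inverse of `Fk κ` on `[0,∞)`. -/
def IsInvF (κ : ℝ) (f : ℝ → ℝ) : Prop :=
  (∀ s, 0 ≤ s → f (Fk κ s) = s) ∧ ∀ t, 0 ≤ t → 0 ≤ f t ∧ Fk κ (f t) = t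

/-- The derivative formula `f_κ'(t) = (1 + 2κ f_κ(t)²)^{-1/2}`. -/
noncomputable def fd (κ : ℝ) (f : ℝ → ℝ) (t : ℝ) : ℝ :=
  1 / Real.sqrt (1 + 2*κ*(f t)^2)

namespace Stmt14Aux

lemma arg_pos (s : ℝ) : (0:ℝ) < 1 + 2*s^2 := by positivity

lemma sqrt_pos' (s : ℝ) : 0 < Real.sqrt (1 + 2*s^2) := Real.sqrt_pos.mpr (arg_pos s)

lemma cont_integrand : Continuous (fun s : ℝ => Real.sqrt (1 + 2*s^2)) := by
  fun_prop

lemma Fk_one_eq : Fk 1 = fun t : ℝ => ∫ s in (0:ℝ)..t, Real.sqrt (1 + 2*s^2) := by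
  funext t; simp [Fk]

lemma hF (s : ℝ) : HasDerivAt (Fk 1) (Real.sqrt (1 + 2*s^2)) s := by
  rw [Fk_one_eq]
  exact (cont_integrand.integral_hasStrictDerivAt 0 s).hasDerivAt

lemma Fk_zero : Fk 1 0 = 0 := by simp [Fk]

lemma hsqrt (s : ℝ) :
    HasDerivAt (fun s : ℝ => Real.sqrt (1 + 2*s^2)) (2*s / Real.sqrt (1 + 2*s^2)) s := by
  have h1 : HasDerivAt (fun s : ℝ => 1 + 2*s^2) (4*s) s := by
    have := ((hasDerivAt_pow 2 s).const_mul 2).const_add 1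
    refine this.congr_deriv ?_; ring
  have h2 := (Real.hasDerivAt_sqrt (ne_of_gt (arg_pos s))).comp s h1
  refine h2.congr_deriv ?_
  field_simp
  ring

lemma hsb (s : ℝ) :
    HasDerivAt (fun s : ℝ => s * Real.sqrt (1 + 2*s^2))
      ((1 + 4*s^2) / Real.sqrt (1 + 2*s^2)) s := by
  have := (hasDerivAt_id s).mul (hsqrt s)
  refine this.congr_deriv ?_
  have h0 := sqrt_pos' s
  have h1 : Real.sqrt (1 + 2*s^2) * Real.sqrt (1 + 2*s^2) = 1 + 2*s^2 :=
    Real.mul_self_sqrt (le_of_lt (arg_pos s))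
  field_simp
  simp only [id]
  nlinarith [h1]

lemma key (s : ℝ) (hs : 0 < s) : s * Real.sqrt (1 + 2*s^2) < 2 * Fk 1 s := by
  set φ : ℝ → ℝ := fun s => 2 * Fk 1 s - s * Real.sqrt (1 + 2*s^2) with hφdef
  have hφ : ∀ x : ℝ, HasDerivAt φ (1 / Real.sqrt (1 + 2*x^2)) x := by
    intro x
    have := ((hF x).const_mul 2).sub (hsb x)
    refine this.congr_deriv ?_
    have h0 := sqrt_pos' x
    have h1 : Real.sqrt (1 + 2*x^2) * Real.sqrt (1 + 2*x^2) = 1 + 2*x^2 :=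
      Real.mul_self_sqrt (le_of_lt (arg_pos x))
    field_simp
    nlinarith [h1]
  have hmono : StrictMono φ := by
    apply strictMono_of_deriv_pos
    intro x
    rw [(hφ x).deriv]
    positivity
  have := hmono hs
  simp only [hφdef, Fk_zero] at this ⊢
  simp at this
  linarith [this]

lemma Fk_antitone : StrictAntiOn (fun s => Fk 1 s / s^2) (Set.Ioi (0:ℝ)) := by
  apply strictAntiOn_of_deriv_neg (convex_Ioi 0)
  · apply ContinuousOn.div
    · exact fun x _ => ((hF x).continuousAt).continuousWithinAt
    · exact (continuous_pow 2).continuousOn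
    · intro x hx; exact pow_ne_zero 2 (ne_of_gt hx)
  · rw [interior_Ioi]
    intro x hx
    have hx0 : (0:ℝ) < x := hx
    have hd : HasDerivAt (fun s => Fk 1 s / s^2)
        ((Real.sqrt (1 + 2*x^2) * x^2 - Fk 1 x * (2*x^1)) / (x^2)^2) x :=
      (hF x).div (hasDerivAt_pow 2 x) (pow_ne_zero 2 (ne_of_gt hx0))
    rw [hd.deriv]
    apply div_neg_of_neg_of_pos
    · have hk := key x hx0
      nlinarith [sqrt_pos' x]
    · positivity

lemma Fk_ge (s : ℝ) (hs : 0 ≤ s) : s ≤ Fk 1 s := by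
  have h2 : ∫ _ in (0:ℝ)..s, (1:ℝ) ≤ ∫ x in (0:ℝ)..s, Real.sqrt (1 + 2*x^2) := by
    apply intervalIntegral.integral_mono_on hs
    · exact intervalIntegrable_const
    · exact (cont_integrand.intervalIntegrable 0 s)
    · intro x _
      nlinarith [Real.sq_sqrt (le_of_lt (arg_pos x)), Real.sqrt_nonneg (1 + 2*x^2)]
  rw [Fk_one_eq]
  simpa using h2

lemma Fk_strictMono : StrictMono (Fk 1) := by
  apply strictMono_of_deriv_pos
  intro x
  rw [(hF x).deriv]
  exact sqrt_pos' x

end Stmt14Aux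

open Stmt14Aux in
theorem stmt_14 (p : ℝ) (hp : 1 < p) (f₁ : ℝ → ℝ) (hf₁ : IsInvF 1 f₁) :
    StrictMonoOn (fun t => (f₁ t) ^ (p + 1) / t) (Set.Ioi 0) ∧
    Filter.Tendsto (fun t => (f₁ t) ^ (p + 1) / t)
      (nhdsWithin 0 (Set.Ioi 0)) (nhds 0) := by
  obtain ⟨hinv1, hinv2⟩ := hf₁
  -- For t > 0, f₁ t > 0 and f₁ t ≤ t
  have hfpos : ∀ t : ℝ, 0 < t → 0 < f₁ t := by
    intro t ht
    obtain ⟨hge, heq⟩ := hinv2 t (le_of_lt ht)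
    rcases lt_or_eq_of_le hge with h | h
    · exact h
    · exfalso; rw [← h] at heq; rw [Fk_zero] at heq; linarith
  have hfle : ∀ t : ℝ, 0 < t → f₁ t ≤ t := by
    intro t ht
    obtain ⟨hge, heq⟩ := hinv2 t (le_of_lt ht)
    calc f₁ t ≤ Fk 1 (f₁ t) := Fk_ge _ hge
    _ = t := heq
  constructor
  · -- strict monotonicity
    intro t₁ ht₁ t₂ ht₂ hlt
    simp only [Set.mem_Ioi] at ht₁ ht₂
    set a := f₁ t₁ with ha
    set b := f₁ t₂ with hb
    have ha0 : 0 < a := hfpos _ ht₁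
    have hb0 : 0 < b := hfpos _ ht₂
    have hFa : Fk 1 a = t₁ := (hinv2 t₁ (le_of_lt ht₁)).2
    have hFb : Fk 1 b = t₂ := (hinv2 t₂ (le_of_lt ht₂)).2
    have hab : a < b := by
      by_contra h
      push_neg at h
      rcases lt_or_eq_of_le h with h' | h'
      · have := Fk_strictMono h'
        rw [hFa, hFb] at this; linarith
      · rw [h'] at hFb; rw [hFa] at hFb; linarith
    -- From antitone: Fk 1 b / b² < Fk 1 a / a²  i.e. a² * t₂ < b² * t₁
    have hanti := Fk_antitone (Set.mem_Ioi.mpr ha0) (Set.mem_Ioi.mpr hb0) hab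
    simp only [hFa, hFb] at hanti
    have hcross : a^2 * t₂ < b^2 * t₁ := by
      rw [div_lt_div_iff₀ (by positivity) (by positivity)] at hanti
      linarith
    -- split rpow
    have hsplit : ∀ x : ℝ, 0 < x → x ^ (p+1) = x^2 * x^(p-1) := by
      intro x hx
      rw [← Real.rpow_natCast x 2, ← Real.rpow_add hx]
      ring_nf
    have hexp : a^(p-1) < b^(p-1) :=
      Real.rpow_lt_rpow (le_of_lt ha0) hab (by linarith)
    simp only
    rw [div_lt_div_iff₀ ht₁ ht₂, hsplit a ha0, hsplit b hb0]
    calc a^2 * a^(p-1) * t₂ = a^(p-1) * (a^2 * t₂) := by ring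
    _ < b^(p-1) * (b^2 * t₁) := by
        apply mul_lt_mul'' hexp hcross
        · positivity
        · positivity
    _ = b^2 * b^(p-1) * t₁ := by ring
  · -- limit
    have ht0 : Filter.Tendsto (fun t : ℝ => t ^ p) (nhdsWithin 0 (Set.Ioi 0)) (nhds 0) := by
      have hc : ContinuousAt (fun x : ℝ => x ^ p) 0 :=
        Real.continuousAt_rpow_const 0 p (Or.inr (by linarith))
      have := hc.tendsto.mono_left (nhdsWithin_le_nhds (s := Set.Ioi (0:ℝ)))
      rwa [Real.zero_rpow (by linarith : p ≠ 0)] at this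
    apply tendsto_of_tendsto_of_tendsto_of_le_of_le' tendsto_const_nhds ht0
    · filter_upwards [self_mem_nhdsWithin] with t ht
      have ht' : 0 < t := ht
      have hf0 := hfpos t ht'
      positivity
    · filter_upwards [self_mem_nhdsWithin] with t ht
      have ht' : 0 < t := ht
      have hf0 := hfpos t ht'
      have hfl := hfle t ht'
      calc (f₁ t) ^ (p+1) / t ≤ (f₁ t) ^ (p+1) / (f₁ t) := by
            apply div_le_div_of_nonneg_left (by positivity) hf0 hfl
      _ = (f₁ t) ^ p := by
            rw [Real.rpow_add hf0, Real.rpow_one]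
            field_simp
      _ ≤ t ^ p := Real.rpow_le_rpow (le_of_lt hf0) hfl (by linarith)
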